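/- Every linear algebraic group over a field of characteristic zero, in particular GLₙ(ℂ), is Jordan: there exists J = J(n) such that every finite subgroup G ⊆ GLₙ(ℂ) contains a normal abelian subgroup of index at most J. (Jordan's classical theorem.) -/

import Mathlib

open Matrix

open Finset

open scoped commutatorElement

namespace JordanGL

variable {n : ℕ}

local notation "MAT" => Matrix (Fin n) (Fin n) ℂ

attribute [local instance] Matrix.frobeniusNormedAddCommGroup Matrix.frobeniusNormedSpace

lemma norm_sq_eq (A : MAT) : ‖A‖ ^ 2 = ∑ i, ∑ j, ‖A i j‖ ^ 2 := by
  have h : (0:ℝ) ≤ ∑ i, ∑ j, ‖A i j‖ ^ (2:ℝ) := by positivity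
  rw [Matrix.frobenius_norm_def, ← Real.rpow_natCast _ 2, ← Real.rpow_mul h]
  norm_num

lemma trace_star_mul_self (A : MAT) : (star A * A).trace = ((‖A‖ ^ 2 : ℝ) : ℂ) := by
  rw [norm_sq_eq]
  push_cast
  rw [Matrix.trace, Finset.sum_comm]
  congr 1
  ext j
  rw [Matrix.diag_apply, Matrix.mul_apply]
  congr 1
  ext i
  rw [Matrix.star_apply,
    show star (A i j) = (starRingEnd ℂ) (A i j) from rfl,
    ← Complex.normSq_eq_conj_mul_self, ← Complex.sq_norm]
  norm_cast

lemma abs_trace_mul_le (A B : MAT) : ‖(A * B).trace‖ ≤ ‖A‖ * ‖B‖ := by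
  have h1 : ‖(A * B).trace‖ ≤ ∑ p : Fin n × Fin n, ‖A p.1 p.2‖ * ‖B p.2 p.1‖ := by
    rw [Matrix.trace]
    refine le_trans (norm_sum_le _ _) ?_
    rw [Fintype.sum_prod_type]
    refine Finset.sum_le_sum fun i _ => ?_
    rw [Matrix.diag_apply, Matrix.mul_apply]
    exact le_trans (norm_sum_le _ _) (Finset.sum_le_sum fun j _ => norm_mul_le _ _)
  have h2 : (∑ p : Fin n × Fin n, ‖A p.1 p.2‖ * ‖B p.2 p.1‖) ^ 2 ≤
      (∑ i, ∑ j, ‖A i j‖ ^ 2) * (∑ i, ∑ j, ‖B i j‖ ^ 2) := by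
    refine le_trans (Finset.sum_mul_sq_le_sq_mul_sq _ _ _) (le_of_eq ?_)
    congr 1
    · rw [Fintype.sum_prod_type]
    · rw [Fintype.sum_prod_type]
      rw [Finset.sum_comm]
  have h3 : (0:ℝ) ≤ ∑ p : Fin n × Fin n, ‖A p.1 p.2‖ * ‖B p.2 p.1‖ := by positivity
  have h4 : (∑ p : Fin n × Fin n, ‖A p.1 p.2‖ * ‖B p.2 p.1‖)^2 ≤ (‖A‖ * ‖B‖)^2 := by
    rw [mul_pow, norm_sq_eq, norm_sq_eq]; exact h2
  calc ‖(A * B).trace‖ ≤ ∑ p : Fin n × Fin n, ‖A p.1 p.2‖ * ‖B p.2 p.1‖ := h1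
    _ ≤ ‖A‖ * ‖B‖ := by
      nlinarith [norm_nonneg A, norm_nonneg B, mul_nonneg (norm_nonneg A) (norm_nonneg B)]

lemma norm_mul_unitary_left (U A : MAT) (hU : star U * U = 1) : ‖U * A‖ = ‖A‖ := by
  have h := trace_star_mul_self (U * A)
  rw [Matrix.star_mul, mul_assoc, ← mul_assoc (star U), hU, one_mul,
    trace_star_mul_self] at h
  have h2 : (‖A‖ ^ 2 : ℝ) = (‖U * A‖ ^ 2 : ℝ) := by exact_mod_cast h
  nlinarith [norm_nonneg A, norm_nonneg (U * A)]

lemma norm_mul_unitary_right (A U : MAT) (hU : U * star U = 1) : ‖A * U‖ = ‖A‖ := by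
  have h := trace_star_mul_self (A * U)
  rw [Matrix.star_mul, show star U * star A * (A * U) = star U * (star A * A * U) by
    simp only [mul_assoc], Matrix.trace_mul_comm, mul_assoc, hU, mul_one,
    trace_star_mul_self] at h
  have h2 : (‖A‖ ^ 2 : ℝ) = (‖A * U‖ ^ 2 : ℝ) := by exact_mod_cast h
  nlinarith [norm_nonneg A, norm_nonneg (A * U)]

lemma norm_unitary (U : MAT) (hU : star U * U = 1) : ‖U‖ = Real.sqrt n := by
  have h := trace_star_mul_self U
  rw [hU, Matrix.trace_one] at h
  simp only [Fintype.card_fin] at h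
  have h2 : (n : ℝ) = ‖U‖ ^ 2 := by exact_mod_cast h
  rw [h2, Real.sqrt_sq (norm_nonneg U)]

/-- Core matrix lemma: an averaging idempotent argument. -/
lemma lemTmat {m : ℕ} (hm : 0 < m) (C Y : MAT) (hCs : star C * C = 1)
    (hCm : C ^ m = 1) (htr : ∀ k : ℕ, (C ^ k * Y).trace = Y.trace)
    (hY : ‖Y - 1‖ < 1) : C = 1 := by
  have hmC : (m:ℂ) ≠ 0 := Nat.cast_ne_zero.2 hm.ne'
  set e : MAT := ((m:ℂ))⁻¹ • ∑ k ∈ Finset.range m, C ^ k with he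
  have hshift : ∑ k ∈ Finset.range m, C ^ (k+1) = ∑ k ∈ Finset.range m, C ^ k := by
    have h1 : ∑ k ∈ Finset.range (m+1), C ^ k
        = (∑ k ∈ Finset.range m, C ^ (k+1)) + C ^ 0 := Finset.sum_range_succ' _ m
    have h2 : ∑ k ∈ Finset.range (m+1), C ^ k
        = (∑ k ∈ Finset.range m, C ^ k) + C ^ m := Finset.sum_range_succ _ m
    rw [h1] at h2
    rw [hCm, pow_zero] at h2
    exact add_right_cancel h2
  have hCe : C * e = e := by
    rw [he, mul_smul_comm, Finset.mul_sum]
    congr 1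
    calc ∑ k ∈ Finset.range m, C * C ^ k = ∑ k ∈ Finset.range m, C ^ (k+1) := by
          refine Finset.sum_congr rfl fun k _ => ?_
          rw [pow_succ']
      _ = _ := hshift
  have hke : ∀ k : ℕ, C ^ k * e = e := by
    intro k
    induction k with
    | zero => rw [pow_zero, one_mul]
    | succ k ih => rw [pow_succ', mul_assoc, ih, hCe]
  have hee : e * e = e := by
    rw [he, smul_mul_assoc, Finset.sum_mul]
    simp_rw [← he, hke]
    rw [Finset.sum_const, Finset.card_range, ← Nat.cast_smul_eq_nsmul ℂ m e, smul_smul,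
      inv_mul_cancel₀ hmC, one_smul]
  have hstarpow : ∀ k : ℕ, star (C ^ k) * C ^ k = 1 := by
    intro k
    induction k with
    | zero => simp
    | succ k ih =>
        rw [pow_succ, Matrix.star_mul, mul_assoc, ← mul_assoc (star (C ^ k)), ih, one_mul, hCs]
  have hes : star e = e := by
    have hsC : ∀ k ∈ Finset.range m, star (C ^ k) = C ^ (m - k) := by
      intro k hk
      have hk' : k ≤ m := le_of_lt (Finset.mem_range.mp hk)
      have h1 : C ^ k * C ^ (m - k) = 1 := by
        rw [← pow_add, Nat.add_sub_cancel' hk', hCm]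
      calc star (C ^ k) = star (C ^ k) * (C ^ k * C ^ (m - k)) := by rw [h1, mul_one]
        _ = (star (C ^ k) * C ^ k) * C ^ (m - k) := by rw [mul_assoc]
        _ = C ^ (m - k) := by rw [hstarpow, one_mul]
    rw [he, star_smul, star_sum,
      show star ((m:ℂ)⁻¹ : ℂ) = ((m:ℂ)⁻¹ : ℂ) by rw [star_inv₀, star_natCast]]
    congr 1
    rw [Finset.sum_congr rfl hsC]
    have hrefl := Finset.sum_range_reflect (fun k => C ^ (k+1)) m
    have hmk : ∀ j ∈ Finset.range m, C ^ (m - j) = C ^ (m - 1 - j + 1) := by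
      intro j hj
      congr 1
      have := Finset.mem_range.mp hj
      omega
    rw [Finset.sum_congr rfl hmk, hrefl, hshift]
  set Q : MAT := 1 - e with hQdef
  have hQQ : Q * Q = Q := by
    rw [hQdef, sub_mul, mul_sub, mul_sub, hee]
    simp only [one_mul, mul_one]
    abel
  have hQs : star Q = Q := by rw [hQdef, star_sub, star_one, hes]
  have htrQ : (Q * Y).trace = 0 := by
    have h4 : (e * Y).trace = Y.trace := by
      rw [he, smul_mul_assoc, Finset.sum_mul, Matrix.trace_smul, Matrix.trace_sum]
      simp_rw [htr]
      rw [Finset.sum_const, Finset.card_range, ← Nat.cast_smul_eq_nsmul ℂ m Y.trace,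
        smul_smul, inv_mul_cancel₀ hmC, one_smul]
    rw [hQdef, sub_mul, one_mul, Matrix.trace_sub, h4, sub_self]
  by_cases hQ0 : Q = 0
  · have he1 : e = (1:MAT) := by
      have : (1:MAT) - e = 0 := hQ0
      linear_combination (norm := abel) -this
    have := hCe
    rw [he1, mul_one] at this
    exact this
  · exfalso
    have heq : Q.trace = - ((Q * (Y - 1)).trace) := by
      have hsplit : Q * Y = Q + Q * (Y - 1) := by
        rw [mul_sub, mul_one]; abel
      have h5 := congrArg Matrix.trace hsplit
      rw [htrQ, Matrix.trace_add] at h5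
      exact eq_neg_of_add_eq_zero_left h5.symm
    have hQtr : Q.trace = ((‖Q‖^2 : ℝ) : ℂ) := by
      calc Q.trace = (star Q * Q).trace := by rw [hQs, hQQ]
        _ = _ := trace_star_mul_self Q
    have habs : (‖Q‖:ℝ)^2 ≤ ‖Q‖ * ‖Y - 1‖ := by
      have : ‖Q.trace‖ = ‖Q‖^2 := by
        rw [hQtr, Complex.norm_real, Real.norm_of_nonneg (by positivity)]
      rw [← this, heq, norm_neg]
      exact abs_trace_mul_le _ _
    have hQpos : 0 < ‖Q‖ := norm_pos_iff.2 hQ0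
    have h7 : ‖Q‖ ≤ ‖Q‖^2 := by
      calc ‖Q‖ = ‖Q * Q‖ := by rw [hQQ]
        _ ≤ ‖Q‖ * ‖Q‖ := Matrix.frobenius_norm_mul _ _
        _ = ‖Q‖^2 := by ring
    nlinarith


section Core

variable {Γ : Type*} [Group Γ] [Finite Γ] (ψ : Γ →* Matrix (Fin n) (Fin n) ℂ)

lemma psi_mul_inv (hψ : ∀ g, star (ψ g) * ψ g = 1) (g : Γ) : ψ g * ψ g⁻¹ = 1 := by
  rw [← ψ.map_mul, mul_inv_cancel, ψ.map_one]

lemma star_psi (hψ : ∀ g, star (ψ g) * ψ g = 1) (g : Γ) : star (ψ g) = ψ g⁻¹ := by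
  calc star (ψ g) = star (ψ g) * (ψ g * ψ g⁻¹) := by rw [psi_mul_inv ψ hψ, mul_one]
    _ = (star (ψ g) * ψ g) * ψ g⁻¹ := by rw [mul_assoc]
    _ = ψ g⁻¹ := by rw [hψ, one_mul]

lemma norm_psi_mul_left (hψ : ∀ g, star (ψ g) * ψ g = 1) (g : Γ) (A : MAT) :
    ‖ψ g * A‖ = ‖A‖ :=
  norm_mul_unitary_left _ _ (hψ g)

lemma norm_psi_mul_right (hψ : ∀ g, star (ψ g) * ψ g = 1) (A : MAT) (g : Γ) :
    ‖A * ψ g‖ = ‖A‖ := by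
  refine norm_mul_unitary_right _ _ ?_
  rw [star_psi ψ hψ, psi_mul_inv ψ hψ]

/-- Conjugation invariance of the distance to the identity. -/
lemma norm_psi_conj (hψ : ∀ g, star (ψ g) * ψ g = 1) (g h : Γ) :
    ‖ψ (h * g * h⁻¹) - 1‖ = ‖ψ g - 1‖ := by
  have key : ψ (h * g * h⁻¹) - 1 = ψ h * (ψ g - 1) * ψ h⁻¹ := by
    rw [mul_sub, sub_mul, mul_one, psi_mul_inv ψ hψ, ← ψ.map_mul, ← ψ.map_mul]
  rw [key, norm_psi_mul_right ψ hψ, norm_psi_mul_left ψ hψ]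

/-- Commutator estimate. -/
lemma comm_est (hψ : ∀ g, star (ψ g) * ψ g = 1) (x y : Γ) :
    ‖ψ ⁅x, y⁆ - 1‖ ≤ 2 * ‖ψ x - 1‖ * ‖ψ y - 1‖ := by
  have hxy : ⁅x, y⁆ = (x * y) * (y * x)⁻¹ := by
    rw [commutatorElement_def]; group
  have key : ψ ⁅x, y⁆ - 1 = (ψ (x * y) - ψ (y * x)) * ψ (y * x)⁻¹ := by
    rw [sub_mul, ← ψ.map_mul, psi_mul_inv ψ hψ, ← hxy]
  have key2 : ψ (x * y) - ψ (y * x)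
      = (ψ x - 1) * (ψ y - 1) - (ψ y - 1) * (ψ x - 1) := by
    rw [ψ.map_mul, ψ.map_mul]
    noncomm_ring
  rw [key, norm_psi_mul_right ψ hψ, key2]
  refine le_trans (norm_sub_le _ _) ?_
  have b1 : ‖(ψ x - 1) * (ψ y - 1)‖ ≤ ‖ψ x - 1‖ * ‖ψ y - 1‖ :=
    Matrix.frobenius_norm_mul _ _
  have b2 : ‖(ψ y - 1) * (ψ x - 1)‖ ≤ ‖ψ y - 1‖ * ‖ψ x - 1‖ :=
    Matrix.frobenius_norm_mul _ _
  nlinarith [norm_nonneg (ψ x - 1), norm_nonneg (ψ y - 1)]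

/-- If the commutator `⁅x,y⁆` commutes with `x` and `ψ y` is close to `1`, then `x` and
`y` commute. -/
lemma lemT (hψ : ∀ g, star (ψ g) * ψ g = 1) (hinj : Function.Injective ψ)
    {x y : Γ} (hcom : Commute x ⁅x, y⁆) (hy : ‖ψ y - 1‖ < 1) : ⁅x, y⁆ = 1 := by
  set c := ⁅x, y⁆ with hc
  have hcy : c * y = x * y * x⁻¹ := by rw [hc, commutatorElement_def]; group
  have claim1 : ∀ k : ℕ, c ^ k * y = x ^ k * y * (x ^ k)⁻¹ := by
    intro k
    induction k with
    | zero => simp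
    | succ k ih =>
        have hcomk : x * c ^ k = c ^ k * x := (hcom.pow_right k).eq
        calc c ^ (k+1) * y = c ^ k * (c * y) := by rw [pow_succ]; group
          _ = c ^ k * (x * y * x⁻¹) := by rw [hcy]
          _ = (c ^ k * x) * y * x⁻¹ := by group
          _ = (x * c ^ k) * y * x⁻¹ := by rw [hcomk]
          _ = x * (c ^ k * y) * x⁻¹ := by group
          _ = x * (x ^ k * y * (x ^ k)⁻¹) * x⁻¹ := by rw [ih]
          _ = x ^ (k+1) * y * (x ^ (k+1))⁻¹ := by group
  have htr : ∀ k : ℕ, ((ψ c) ^ k * ψ y).trace = (ψ y).trace := by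
    intro k
    have h1 : (ψ c) ^ k * ψ y = ψ (x ^ k) * ψ (y * (x ^ k)⁻¹) := by
      rw [← ψ.map_pow, ← ψ.map_mul, claim1 k, ← ψ.map_mul]
      congr 1
      group
    rw [h1, Matrix.trace_mul_comm, ← ψ.map_mul, inv_mul_cancel_right]
  have hmpos : 0 < orderOf c := orderOf_pos c
  have hCm : (ψ c) ^ orderOf c = 1 := by
    rw [← ψ.map_pow, pow_orderOf_eq_one, ψ.map_one]
  have := lemTmat hmpos (ψ c) (ψ y) (hψ c) hCm htr hy
  apply hinj
  rw [this, ψ.map_one]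

/-- Small elements commute. -/
lemma key_commute (hψ : ∀ g, star (ψ g) * ψ g = 1) (hinj : Function.Injective ψ) :
    ∀ x y : Γ, ‖ψ x - 1‖ < 1/2 → ‖ψ y - 1‖ < 1/2 → x * y = y * x := by
  classical
  by_contra hcon
  push_neg at hcon
  obtain ⟨x₀, y₀, hx₀, hy₀, hne₀⟩ := hcon
  have : Fintype Γ := Fintype.ofFinite Γ
  set P : Finset (Γ × Γ) := Finset.univ.filter
    (fun p => ‖ψ p.1 - 1‖ < 1/2 ∧ ‖ψ p.2 - 1‖ < 1/2 ∧ p.1 * p.2 ≠ p.2 * p.1) with hP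
  have hPne : P.Nonempty :=
    ⟨(x₀, y₀), by rw [hP, Finset.mem_filter]; exact ⟨Finset.mem_univ _, hx₀, hy₀, hne₀⟩⟩
  obtain ⟨p, hpP, hpmin⟩ := P.exists_min_image (fun p => ‖ψ p.1 - 1‖ + ‖ψ p.2 - 1‖) hPne
  obtain ⟨x, y⟩ := p
  rw [hP, Finset.mem_filter] at hpP
  obtain ⟨-, hx, hy, hxy⟩ := hpP
  have hy1 : y ≠ 1 := by rintro rfl; simp at hxy
  have hypos : 0 < ‖ψ y - 1‖ := by
    rw [norm_pos_iff, sub_ne_zero]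
    intro h
    exact hy1 (hinj (by rw [h, ψ.map_one]))
  set c := ⁅x, y⁆ with hc
  have hcne : c ≠ 1 := by
    intro h
    exact hxy (commutatorElement_eq_one_iff_mul_comm.mp (hc ▸ h))
  have hcn : ‖ψ c - 1‖ ≤ 2 * ‖ψ x - 1‖ * ‖ψ y - 1‖ := comm_est ψ hψ x y
  have hcy : ‖ψ c - 1‖ < ‖ψ y - 1‖ := by nlinarith
  have hcsmall : ‖ψ c - 1‖ < 1/2 := hcy.trans hy
  have hxc : Commute x c := by
    rw [Commute, SemiconjBy]
    by_contra hxc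
    have hmem : (x, c) ∈ P := by
      rw [hP, Finset.mem_filter]
      exact ⟨Finset.mem_univ _, hx, hcsmall, hxc⟩
    have := hpmin _ hmem
    simp only at this
    linarith
  exact hcne (lemT ψ hψ hinj hxc (by linarith))

end Core

end JordanGL

attribute [local instance] Matrix.frobeniusNormedAddCommGroup Matrix.frobeniusNormedSpace

open scoped ComplexOrder in
open scoped MatrixOrder in
open JordanGL in
theorem jordan_gl (n : ℕ) :
    ∃ J : ℕ, ∀ H : Subgroup (GL (Fin n) ℂ), Finite H →
      ∃ A : Subgroup H, A.Normal ∧ (∀ a b : A, a * b = b * a) ∧ A.index ≤ J := by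
  classical
  have hProper : ProperSpace (Matrix (Fin n) (Fin n) ℂ) := FiniteDimensional.proper ℂ _
  have hcomp : IsCompact (Metric.closedBall (0 : Matrix (Fin n) (Fin n) ℂ) (Real.sqrt n)) :=
    isCompact_closedBall _ _
  obtain ⟨t, htfin, htcover⟩ :=
    (Metric.totallyBounded_iff.mp hcomp.totallyBounded) (1/5) (by norm_num)
  refine ⟨htfin.toFinset.card, ?_⟩
  intro H _
  have : Fintype H := Fintype.ofFinite H
  -- the embedding into matrices
  set u : H →* Matrix (Fin n) (Fin n) ℂ :=
    (Units.coeHom (Matrix (Fin n) (Fin n) ℂ)).comp H.subtype with hu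
  have hu_inj : Function.Injective u := by
    intro a b hab
    exact Subtype.ext (Units.ext hab)
  -- the invariant positive definite form
  set P : Matrix (Fin n) (Fin n) ℂ := ∑ h : H, star (u h) * u h with hPdef
  have hPinv : ∀ g : H, star (u g) * P * u g = P := by
    intro g
    calc star (u g) * P * u g = ∑ h : H, star (u (h * g)) * u (h * g) := by
          rw [hPdef, Finset.mul_sum, Finset.sum_mul]
          refine Finset.sum_congr rfl fun h _ => ?_
          rw [u.map_mul, Matrix.star_mul]
          simp only [mul_assoc]
      _ = P := Fintype.sum_equiv (Equiv.mulRight g) _ _ (fun h => rfl)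
  have hPd : P.PosDef := by
    have h1 : P = star (u 1) * u 1 + ∑ h ∈ Finset.univ.erase 1, star (u h) * u h := by
      rw [hPdef, ← Finset.add_sum_erase _ _ (Finset.mem_univ (1 : H))]
    rw [h1, u.map_one, star_one, one_mul]
    refine Matrix.PosDef.add_posSemidef Matrix.PosDef.one ?_
    refine Finset.sum_induction _ _ (fun a b ha hb => ha.add hb) Matrix.PosSemidef.zero ?_
    intro h _
    exact Matrix.posSemidef_conjTranspose_mul_self (u h)
  -- its square root
  set S : Matrix (Fin n) (Fin n) ℂ := CFC.sqrt P with hSdef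
  have hSS : S * S = P := CFC.sqrt_mul_sqrt_self P hPd.posSemidef.nonneg
  have hSherm : star S = S := (CFC.sqrt_nonneg P).posSemidef.isHermitian
  have hSdet : IsUnit S.det := by
    have h2 : S.det * S.det = P.det := by rw [← Matrix.det_mul, hSS]
    have h3 : P.det ≠ 0 := ne_of_gt hPd.det_pos
    have : S.det ≠ 0 := fun h => h3 (by rw [← h2, h, mul_zero])
    exact this.isUnit
  have hS1 : S * S⁻¹ = 1 := Matrix.mul_nonsing_inv _ hSdet
  have hS2 : S⁻¹ * S = 1 := Matrix.nonsing_inv_mul _ hSdet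
  -- conjugated representation
  set ψ : H →* Matrix (Fin n) (Fin n) ℂ :=
    { toFun := fun h => S * u h * S⁻¹
      map_one' := by show S * u 1 * S⁻¹ = 1; rw [u.map_one, mul_one, hS1]
      map_mul' := fun a b => by
        show S * u (a * b) * S⁻¹ = (S * u a * S⁻¹) * (S * u b * S⁻¹)
        rw [u.map_mul]
        calc S * (u a * u b) * S⁻¹ = S * u a * (S⁻¹ * S) * u b * S⁻¹ := by
              rw [hS2]; noncomm_ring
          _ = S * u a * S⁻¹ * (S * u b * S⁻¹) := by noncomm_ring } with hψdef
  have hψ : ∀ g : H, star (ψ g) * ψ g = 1 := by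
    intro g
    have hstarψ : star (ψ g) = S⁻¹ * star (u g) * S := by
      show star (S * u g * S⁻¹) = _
      rw [Matrix.star_mul, Matrix.star_mul]
      have h1 : star (S⁻¹) = S⁻¹ := by
        rw [Matrix.star_eq_conjTranspose, Matrix.conjTranspose_nonsing_inv,
          ← Matrix.star_eq_conjTranspose, hSherm]
      rw [h1, hSherm, ← mul_assoc]
    show star (ψ g) * (S * u g * S⁻¹) = 1
    rw [hstarψ]
    calc S⁻¹ * star (u g) * S * (S * u g * S⁻¹)
        = S⁻¹ * (star (u g) * (S * S) * u g) * S⁻¹ := by noncomm_ring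
      _ = S⁻¹ * (star (u g) * P * u g) * S⁻¹ := by rw [hSS]
      _ = S⁻¹ * P * S⁻¹ := by rw [hPinv g]
      _ = S⁻¹ * (S * S) * S⁻¹ := by rw [hSS]
      _ = (S⁻¹ * S) * (S * S⁻¹) := by noncomm_ring
      _ = 1 := by rw [hS1, hS2, one_mul]
  have hinj : Function.Injective ψ := by
    intro a b hab
    have h4 : S * u a * S⁻¹ = S * u b * S⁻¹ := hab
    apply hu_inj
    calc u a = S⁻¹ * (S * u a * S⁻¹) * S := by
          rw [show S⁻¹ * (S * u a * S⁻¹) * S = (S⁻¹ * S) * u a * (S⁻¹ * S) by noncomm_ring,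
            hS2, one_mul, mul_one]
      _ = S⁻¹ * (S * u b * S⁻¹) * S := by rw [h4]
      _ = u b := by
          rw [show S⁻¹ * (S * u b * S⁻¹) * S = (S⁻¹ * S) * u b * (S⁻¹ * S) by noncomm_ring,
            hS2, one_mul, mul_one]
  -- the abelian normal subgroup
  set Sset : Set H := {g : H | ‖ψ g - 1‖ < 1/2} with hSset
  set A : Subgroup H := Subgroup.closure Sset with hA
  have hnormal : A.Normal := by
    refine ⟨fun g hg h => ?_⟩
    rw [hA] at hg ⊢
    induction hg using Subgroup.closure_induction with
    | mem z hz =>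
        refine Subgroup.subset_closure ?_
        show ‖ψ (h * z * h⁻¹) - 1‖ < 1/2
        rw [norm_psi_conj ψ hψ]
        exact hz
    | one => simpa using Subgroup.one_mem _
    | mul a b ha hb iha ihb =>
        have h5 : h * (a * b) * h⁻¹ = (h * a * h⁻¹) * (h * b * h⁻¹) := by group
        rw [h5]
        exact Subgroup.mul_mem _ iha ihb
    | inv a ha iha =>
        have h5 : h * a⁻¹ * h⁻¹ = (h * a * h⁻¹)⁻¹ := by group
        rw [h5]
        exact Subgroup.inv_mem _ iha
  have habelian : ∀ a b : A, a * b = b * a := by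
    intro a b
    refine Subtype.ext ?_
    show (a : H) * b = (b : H) * a
    refine Subgroup.closure_induction₂
      (p := fun x y _ _ => Commute x y)
      (fun x y hx hy => key_commute ψ hψ hinj x y hx hy)
      (fun x hx => Commute.one_left x)
      (fun x hx => Commute.one_right x)
      (fun x y z hx hy hz h1 h2 => h1.mul_left h2)
      (fun y z x hy hz hx h1 h2 => h1.mul_right h2)
      (fun x y hx hy h1 => h1.inv_left)
      (fun x y hx hy h1 => h1.inv_right)
      a.2 b.2
  refine ⟨A, hnormal, habelian, ?_⟩
  -- index bound via the net
  rw [Subgroup.index_eq_card]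
  have hnet : ∀ q : H ⧸ A, ∃ p, p ∈ t ∧ ψ q.out ∈ Metric.ball p (1/5) := by
    intro q
    have hq : ψ q.out ∈ Metric.closedBall (0 : Matrix (Fin n) (Fin n) ℂ) (Real.sqrt n) := by
      rw [Metric.mem_closedBall, dist_zero_right, norm_unitary _ (hψ _)]
    have h6 := htcover hq
    simpa using h6
  choose F hFt hFb using hnet
  have hinjF : Function.Injective F := by
    intro q q' hqq
    by_contra hne
    have hnot : (q.out)⁻¹ * q'.out ∉ A := by
      intro hmem
      exact hne (by
        rw [← QuotientGroup.out_eq' q, ← QuotientGroup.out_eq' q']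
        exact QuotientGroup.eq.mpr hmem)
    have hfar : (1/2 : ℝ) ≤ ‖ψ ((q.out)⁻¹ * q'.out) - 1‖ := by
      by_contra hlt
      push_neg at hlt
      exact hnot (Subgroup.subset_closure hlt)
    have hdist : dist (ψ q.out) (ψ q'.out) = ‖ψ ((q.out)⁻¹ * q'.out) - 1‖ := by
      rw [dist_eq_norm]
      have h7 : ψ q.out - ψ q'.out = ψ q.out * (1 - ψ ((q.out)⁻¹ * q'.out)) := by
        rw [mul_sub, mul_one, ← ψ.map_mul, mul_inv_cancel_left]
      rw [h7, norm_psi_mul_left ψ hψ, norm_sub_rev]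
    have h8 := hFb q
    have h9 := hFb q'
    rw [hqq] at h8
    rw [Metric.mem_ball] at h8 h9
    have h10 : dist (ψ q.out) (ψ q'.out) < 2/5 := by
      calc dist (ψ q.out) (ψ q'.out)
          ≤ dist (ψ q.out) (F q') + dist (ψ q'.out) (F q') := dist_triangle_right _ _ _
        _ < 2/5 := by linarith
    rw [hdist] at h10
    linarith
  have hfint : Finite (↥htfin.toFinset) := inferInstance
  have hcard : Nat.card (H ⧸ A) ≤ Nat.card (↥htfin.toFinset) := by
    refine Nat.card_le_card_of_injective
      (fun q => (⟨F q, htfin.mem_toFinset.mpr (hFt q)⟩ : ↥htfin.toFinset)) ?_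
    intro q q' h
    exact hinjF (congrArg Subtype.val h)
  rwa [Nat.card_eq_finsetCard] at hcard
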